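/- Let p be an odd prime, ζ a primitive p-th root of unity, and σ, τ two distinct ring endomorphisms of ℤ[ζ]. Let D : ℤ[ζ] → ℤ[ζ] be a ℤ-linear map with D(1) = 0 such that D(ζ^k) = (Σ_{(i,j): i+j=k−1} σ(ζ)^i · τ(ζ)^j) · D(ζ) for all k ∈ {1, 2, ..., p−2}, where the sum runs over all pairs of non-negative integers (i,j) with i + j = k − 1. Then D is a (σ,τ)-derivation of ℤ[ζ]. -/

import Mathlib

set_option synthInstance.maxHeartbeats 1000000
set_option maxHeartbeats 1000000


/-- Let `p` be an odd prime, `ζ` a primitive `p`-th root of unity, and `σ`, `τ`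
two distinct ring endomorphisms of `ℤ[ζ]`.  Let `D : ℤ[ζ] → ℤ[ζ]` be a `ℤ`-linear map with
`D 1 = 0` such that `D (ζ^k) = (Σ_{i+j=k-1} σ(ζ)^i * τ(ζ)^j) * D ζ` for all
`k ∈ {1, …, p-2}`.  Then `D` is a `(σ,τ)`-derivation. -/
theorem stmt10 (p : ℕ) (hp : p.Prime) (hodd : Odd p) (ζ : ℂ) (hζ : IsPrimitiveRoot ζ p)
    (z : Algebra.adjoin ℤ ({ζ} : Set ℂ)) (hz : (z : ℂ) = ζ)
    (σ τ : Algebra.adjoin ℤ ({ζ} : Set ℂ) →+* Algebra.adjoin ℤ ({ζ} : Set ℂ))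
    (hστ : σ ≠ τ)
    (D : Algebra.adjoin ℤ ({ζ} : Set ℂ) →ₗ[ℤ] Algebra.adjoin ℤ ({ζ} : Set ℂ))
    (hD1 : D 1 = 0)
    (hDk : ∀ k : ℕ, 1 ≤ k → k ≤ p - 2 →
      D (z ^ k) = (∑ ij ∈ Finset.HasAntidiagonal.antidiagonal (k - 1), σ z ^ ij.1 * τ z ^ ij.2) * D z) :
    ∀ x y, D (x * y) = D x * τ y + σ x * D y := by
  have hp3 : 3 ≤ p := by
    obtain ⟨k, hk⟩ := hodd
    have h2 : p ≠ 2 := by omega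
    have := hp.two_le
    omega
  -- z ^ p = 1
  have hzp : z ^ p = 1 := by
    apply Subtype.ext
    push_cast [hz]
    exact hζ.pow_eq_one
  have hsum : (∑ k ∈ Finset.range p, z ^ k) = 0 := by
    apply Subtype.ext
    push_cast [hz]
    exact hζ.geom_sum_eq_zero (by omega)
  -- every element is in the ℤ-span of powers of z
  have hspan : ∀ x : Algebra.adjoin ℤ ({ζ} : Set ℂ),
      x ∈ Submodule.span ℤ (Set.range fun n : ℕ => z ^ n) := by
    intro x
    have htop : Algebra.adjoin ℤ ({z} : Set (Algebra.adjoin ℤ ({ζ} : Set ℂ))) = ⊤ := by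
      have h := Algebra.adjoin_adjoin_coe_preimage (R := ℤ) (s := ({ζ} : Set ℂ))
      have hpre : (((↑) : Algebra.adjoin ℤ ({ζ} : Set ℂ) → ℂ) ⁻¹' {ζ}) = {z} := by
        ext w
        simp only [Set.mem_preimage, Set.mem_singleton_iff]
        constructor
        · intro hw; exact Subtype.ext (by rw [hw, hz])
        · intro hw; rw [hw, hz]
      rwa [hpre] at h
    have h1 := Algebra.adjoin_eq_span (R := ℤ)
      (s := ({z} : Set (Algebra.adjoin ℤ ({ζ} : Set ℂ))))
    have h2 : ((Submonoid.closure ({z} : Set (Algebra.adjoin ℤ ({ζ} : Set ℂ)))) : Set _)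
        = Set.range fun n : ℕ => z ^ n := by
      ext w
      simp only [SetLike.mem_coe, Submonoid.mem_closure_singleton, Set.mem_range]
    rw [htop] at h1
    rw [← h2]
    rw [← h1]
    exact trivial
  have hzne : σ z ≠ τ z := by
    intro h
    apply hστ
    apply RingHom.ext
    intro x
    have hx := hspan x
    induction hx using Submodule.span_induction with
    | mem w hw => obtain ⟨n, rfl⟩ := hw; rw [map_pow, map_pow, h]
    | zero => simp
    | add a b _ _ ha hb => rw [map_add, map_add, ha, hb]
    | smul a x _ hx => rw [map_zsmul, map_zsmul, hx]
  have hne : σ z - τ z ≠ 0 := sub_ne_zero.mpr hzne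
  -- key identity for small powers
  have hsmall : ∀ n : ℕ, n ≤ p - 2 →
      (σ z - τ z) * D (z ^ n) = (σ (z ^ n) - τ (z ^ n)) * D z := by
    intro n hn
    rcases Nat.eq_zero_or_pos n with rfl | hn1
    · simp [hD1]
    · rw [hDk n hn1 hn, map_pow, map_pow, ← mul_assoc, mul_comm (σ z - τ z)]
      congr 1
      rw [Finset.Nat.sum_antidiagonal_eq_sum_range_succ_mk]
      have hn' : (n - 1).succ = n := by omega
      rw [hn']
      exact geom_sum₂_mul (σ z) (τ z) n
  -- key identity for all powers below p
  have key0 : ∀ n : ℕ, n < p →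
      (σ z - τ z) * D (z ^ n) = (σ (z ^ n) - τ (z ^ n)) * D z := by
    intro n hn
    rcases lt_or_ge n (p - 1) with hlt | hge
    · exact hsmall n (by omega)
    · have hn' : n = p - 1 := by omega
      subst hn'
      have hp' : p = (p - 1) + 1 := by omega
      rw [hp', Finset.sum_range_succ] at hsum
      have hz1 : z ^ (p - 1) = -∑ k ∈ Finset.range (p - 1), z ^ k := by
        linear_combination hsum
      rw [hz1, map_neg, map_neg, map_neg, map_sum, map_sum, map_sum]
      rw [mul_neg, Finset.mul_sum]
      rw [neg_sub_neg, ← Finset.sum_sub_distrib, Finset.sum_mul]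
      rw [← Finset.sum_neg_distrib]
      refine Finset.sum_congr rfl fun k hk => ?_
      have hk' : k ≤ p - 2 := by
        have := Finset.mem_range.mp hk; omega
      have := hsmall k hk'
      linear_combination -this
  -- key identity for all powers
  have key : ∀ n : ℕ,
      (σ z - τ z) * D (z ^ n) = (σ (z ^ n) - τ (z ^ n)) * D z := by
    intro n
    have h1 : z ^ n = z ^ (n % p) := by
      conv_lhs => rw [← Nat.mod_add_div n p, pow_add, pow_mul, hzp, one_pow, mul_one]
    rw [h1]
    exact key0 _ (Nat.mod_lt _ hp.pos)
  -- extend to all elements by linearity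
  have key2 : ∀ x, (σ z - τ z) * D x = (σ x - τ x) * D z := by
    intro x
    have hx := hspan x
    induction hx using Submodule.span_induction with
    | mem w hw => obtain ⟨n, rfl⟩ := hw; exact key n
    | zero => simp
    | add a b _ _ ha hb =>
      rw [map_add, map_add, map_add]
      linear_combination ha + hb
    | smul a x _ hx =>
      rw [map_zsmul, map_zsmul, map_zsmul, mul_smul_comm, hx, ← smul_sub, smul_mul_assoc]
  intro x y
  apply mul_left_cancel₀ hne
  rw [key2 (x * y), map_mul, map_mul]
  linear_combination -τ y * key2 x - σ x * key2 y
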